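/- arXiv:1207.5286 — 3 statements merged into one kernel-verified Lean document; each statement's English description precedes it below -/
import Mathlib

section
/- Let λ > 0 and define Ψ₁ : ℝ → ℝ by Ψ₁(v) = e^{2λv} − (1 + 2λv + 2λ²v²) for v ≥ 0 and Ψ₁(v) = 0 for v ≤ 0. Then for every M₁ > 0 there exists a constant C > 0 (depending only on λ and M₁) such that for all v ∈ [−M₁, M₁]: 0 ≤ v·Ψ₁'(v) ≤ C·Ψ₁(v). -/
open Real Set

lemma cubic_le_exp {x : ℝ} (hx : 0 ≤ x) : 1 + x + x ^ 2 / 2 + x ^ 3 / 6 ≤ Real.exp x := by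
  have := Real.sum_le_exp_of_nonneg hx 4
  simp [Finset.sum_range_succ, Nat.factorial] at this
  linarith

lemma key_B {x : ℝ} (hx : 0 ≤ x) :
    Real.exp x - 1 - x ≤ x ^ 2 / 2 * Real.exp x := by
  -- equivalent to g(x) := x²/2 - 1 + e^{-x} + x e^{-x} ≥ 0, g monotone on Ici 0
  set g : ℝ → ℝ := fun x => x ^ 2 / 2 - 1 + Real.exp (-x) + x * Real.exp (-x) with hg
  have hd : ∀ y : ℝ, HasDerivAt g (y * (1 - Real.exp (-y))) y := by
    intro y
    have h1 : HasDerivAt (fun y : ℝ => Real.exp (-y)) (-Real.exp (-y)) y := by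
      simpa using ((hasDerivAt_id y).neg.exp)
    have h2 : HasDerivAt (fun y : ℝ => y * Real.exp (-y))
        (1 * Real.exp (-y) + y * (-Real.exp (-y))) y := (hasDerivAt_id y).mul h1
    have h3 : HasDerivAt (fun y : ℝ => y ^ 2 / 2 - 1) y y := by
      simpa using (((hasDerivAt_pow 2 y).div_const 2).sub_const 1)
    have := (h3.add h1).add h2
    exact this.congr_deriv (by ring)
  have hmono : MonotoneOn g (Ici (0 : ℝ)) := by
    apply monotoneOn_of_deriv_nonneg (convex_Ici 0)
      (Continuous.continuousOn (by continuity))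
    · intro y hy
      exact (hd y).differentiableAt.differentiableWithinAt
    · intro y hy
      rw [interior_Ici] at hy
      rw [(hd y).deriv]
      have : Real.exp (-y) ≤ 1 := Real.exp_le_one_iff.2 (by linarith [hy.out])
      have := Real.exp_pos (-y)
      nlinarith [hy.out]
  have h0 : g 0 = 0 := by simp [hg]
  have hgx : 0 ≤ g x := by
    have := hmono (self_mem_Ici) (mem_Ici.2 hx) hx
    rw [h0] at this; exact this
  have hE : Real.exp (-x) = (Real.exp x)⁻¹ := by rw [Real.exp_neg]
  have hEpos := Real.exp_pos x
  simp only [hg, hE] at hgx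
  have hinv : (Real.exp x)⁻¹ * Real.exp x = 1 := inv_mul_cancel₀ hEpos.ne'
  nlinarith [mul_nonneg hgx hEpos.le, hinv]

/-- For `Ψ₁(v) = e^{2λv} − (1 + 2λv + 2λ²v²)` (for `v ≥ 0`, extended by `0` for `v ≤ 0`)
and any `M₁ > 0`, there is a constant `C > 0` with
`0 ≤ v·Ψ₁'(v) ≤ C·Ψ₁(v)` for all `v ∈ [−M₁, M₁]`. -/
theorem stmt_4 (lam : ℝ) (hlam : 0 < lam) (Ψ : ℝ → ℝ)
    (hΨ : ∀ v : ℝ, Ψ v =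
      if 0 ≤ v then Real.exp (2 * lam * v) - (1 + 2 * lam * v + 2 * lam ^ 2 * v ^ 2) else 0)
    (M₁ : ℝ) (hM₁ : 0 < M₁) :
    ∃ C : ℝ, 0 < C ∧ ∀ v ∈ Set.Icc (-M₁) M₁,
      0 ≤ v * deriv Ψ v ∧ v * deriv Ψ v ≤ C * Ψ v := by
  refine ⟨3 * Real.exp (2 * lam * M₁), by positivity, ?_⟩
  intro v hv
  rcases lt_trichotomy v 0 with hv0 | hv0 | hv0
  · -- v < 0 : Ψ = 0 near v, deriv = 0
    have hEq : Ψ =ᶠ[nhds v] fun _ => (0 : ℝ) := by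
      filter_upwards [Iio_mem_nhds hv0] with y hy
      rw [hΨ y, if_neg (not_le.2 hy)]
    have hderiv : deriv Ψ v = 0 := by
      rw [hEq.deriv_eq]; simp
    have hΨv : Ψ v = 0 := by rw [hΨ v, if_neg (not_le.2 hv0)]
    simp [hderiv, hΨv]
  · -- v = 0
    subst hv0
    have hΨ0 : Ψ 0 = 0 := by rw [hΨ 0]; simp
    simp [hΨ0]
  · -- v > 0
    have hEq : Ψ =ᶠ[nhds v] fun y => Real.exp (2 * lam * y) - (1 + 2 * lam * y + 2 * lam ^ 2 * y ^ 2) := by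
      filter_upwards [Ioi_mem_nhds hv0] with y hy
      rw [hΨ y, if_pos (le_of_lt hy)]
    have hD : HasDerivAt (fun y : ℝ => Real.exp (2 * lam * y) - (1 + 2 * lam * y + 2 * lam ^ 2 * y ^ 2))
        (2 * lam * Real.exp (2 * lam * v) - (2 * lam + 2 * lam ^ 2 * (2 * v))) v := by
      have h1 : HasDerivAt (fun y : ℝ => 2 * lam * y) (2 * lam) v := by
        simpa using (hasDerivAt_id v).const_mul (2 * lam)
      have h2 := h1.exp
      have h3 : HasDerivAt (fun y : ℝ => 1 + 2 * lam * y + 2 * lam ^ 2 * y ^ 2)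
          (2 * lam + 2 * lam ^ 2 * (2 * v)) v := by
        have := ((hasDerivAt_pow 2 v).const_mul (2 * lam ^ 2))
        have h4 := ((hasDerivAt_const v (1:ℝ)).add h1).add this
        exact h4.congr_deriv (by ring)
      have := h2.sub h3
      exact this.congr_deriv (by ring)
    have hderiv : deriv Ψ v = 2 * lam * Real.exp (2 * lam * v) - (2 * lam + 2 * lam ^ 2 * (2 * v)) := by
      rw [hEq.deriv_eq, hD.deriv]
    have hΨv : Ψ v = Real.exp (2 * lam * v) - (1 + 2 * lam * v + 2 * lam ^ 2 * v ^ 2) := by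
      rw [hΨ v, if_pos hv0.le]
    set x := 2 * lam * v with hxdef
    have hx : 0 < x := by positivity
    set E := Real.exp x with hEdef
    set EX := Real.exp (2 * lam * M₁) with hEXdef
    have hA : 1 + x + x ^ 2 / 2 + x ^ 3 / 6 ≤ E := cubic_le_exp hx.le
    have hB : E - 1 - x ≤ x ^ 2 / 2 * E := key_B hx.le
    have hle : E ≤ EX := Real.exp_le_exp.2 (by nlinarith [hv.2])
    have hE1 : (1:ℝ) ≤ E := Real.one_le_exp hx.le
    have hEX1 : (1:ℝ) ≤ EX := hE1.trans hle
    have hΨeq : Ψ v = E - 1 - x - x ^ 2 / 2 := by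
      rw [hΨv]; rw [hxdef]; ring_nf
    have hvd : v * deriv Ψ v = x * (E - 1 - x) := by
      rw [hderiv]
      have h2lv : 2 * lam * v = x := rfl
      field_simp [hxdef]
      ring
    constructor
    · rw [hvd]
      nlinarith [hx]
    · rw [hvd, hΨeq]
      have h1 : x * (E - 1 - x) ≤ x * (x ^ 2 / 2 * E) :=
        mul_le_mul_of_nonneg_left hB hx.le
      have h2 : x ^ 3 / 6 ≤ E - 1 - x - x ^ 2 / 2 := by nlinarith
      nlinarith [mul_le_mul_of_nonneg_right hle (le_of_lt (by positivity : (0:ℝ) < x^3)),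
        mul_le_mul_of_nonneg_left h2 (by positivity : (0:ℝ) ≤ 3 * EX)]
end

section
/- Let μ₀ > 0, Λ ≥ 0 and M > 0. Then there exist constants β > 0, B > 1 and δ > 0 such that the function w(u) = B − e^{−β(u+M)} satisfies, for every u ∈ [−M, M]: w(u) > 0, w'(u) > 0, w''(u) < 0, and (μ₀/2)·(w''(u)/w(u)) + 2Λ·(w'(u)/w(u)) + (w'(u)/w(u))² ≤ −δ. -/
private lemma stmt_10_aux (μ₀ Λ β B a : ℝ) (hμβ : μ₀ * β = 4 * Λ + 4) (h : B - a ≠ 0) :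
    μ₀ / 2 * (-(β * β * a) / (B - a)) + 2 * Λ * (β * a / (B - a)) +
      (β * a / (B - a)) ^ 2 = (β * a / (B - a)) * (β * a / (B - a) - 2) := by
  have h1 : μ₀ / 2 * (-(β * β * a) / (B - a)) + 2 * Λ * (β * a / (B - a)) +
      (β * a / (B - a)) ^ 2 = -(μ₀ * β) * (β * a / (B - a)) / 2 +
      2 * Λ * (β * a / (B - a)) + (β * a / (B - a)) ^ 2 := by ring
  rw [h1, hμβ]; ring

/-- Choice of parameters in the uniqueness proof: given `μ₀ > 0`, `Λ ≥ 0`, `M > 0`, there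
exist `β > 0`, `B > 1` and `δ > 0` so that `w(u) = B − e^{−β(u+M)}` satisfies, on `[−M, M]`,
`w > 0`, `w' > 0`, `w'' < 0` and `(μ₀/2)(w''/w) + 2Λ(w'/w) + (w'/w)² ≤ −δ`. -/
theorem stmt_10 (μ₀ Λ M : ℝ) (hμ₀ : 0 < μ₀) (hΛ : 0 ≤ Λ) (hM : 0 < M) :
    ∃ β B δ : ℝ, 0 < β ∧ 1 < B ∧ 0 < δ ∧
      ∀ u ∈ Set.Icc (-M) M,
        let w : ℝ → ℝ := fun x => B - Real.exp (-β * (x + M))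
        0 < w u ∧ 0 < deriv w u ∧ deriv (deriv w) u < 0 ∧
        μ₀ / 2 * (deriv (deriv w) u / w u) + 2 * Λ * (deriv w u / w u) +
          (deriv w u / w u) ^ 2 ≤ -δ := by
  set β : ℝ := (4 * Λ + 4) / μ₀ with hβdef
  have hβ : 0 < β := by positivity
  set B : ℝ := β + 2 with hBdef
  have hB : 1 < B := by simp only [hBdef]; linarith
  refine ⟨β, B, β * Real.exp (-(2 * β * M)) / B, hβ, hB, by positivity, ?_⟩
  intro u hu
  obtain ⟨hu1, hu2⟩ := hu
  intro w
  have hd1 : ∀ x : ℝ, HasDerivAt w (β * Real.exp (-β * (x + M))) x := by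
    intro x
    have h1 : HasDerivAt (fun x : ℝ => -β * (x + M)) (-β * 1) x :=
      ((hasDerivAt_id x).add_const M).const_mul (-β)
    have h2 := h1.exp
    have h3 := (hasDerivAt_const x B).sub h2
    exact h3.congr_deriv (by ring)
  have hderiv1 : deriv w = fun x => β * Real.exp (-β * (x + M)) := by
    funext x; exact (hd1 x).deriv
  have hd2 : ∀ x : ℝ, HasDerivAt (fun x => β * Real.exp (-β * (x + M)))
      (-(β * β * Real.exp (-β * (x + M)))) x := by
    intro x
    have h1 : HasDerivAt (fun x : ℝ => -β * (x + M)) (-β * 1) x :=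
      ((hasDerivAt_id x).add_const M).const_mul (-β)
    have h2 := (h1.exp).const_mul β
    exact h2.congr_deriv (by ring)
  have hderiv2 : deriv (deriv w) u = -(β * β * Real.exp (-β * (u + M))) := by
    rw [hderiv1]; exact (hd2 u).deriv
  set a : ℝ := Real.exp (-β * (u + M)) with hadef
  have ha : 0 < a := Real.exp_pos _
  have ha1 : a ≤ 1 := by
    rw [hadef]
    apply Real.exp_le_one_iff.mpr
    nlinarith
  have ha2 : Real.exp (-(2 * β * M)) ≤ a := by
    rw [hadef]
    apply Real.exp_le_exp.mpr
    nlinarith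
  have hw : w u = B - a := rfl
  have hwpos : 0 < w u := by rw [hw]; linarith
  have hderiv1u : deriv w u = β * a := by rw [hderiv1]
  refine ⟨hwpos, by rw [hderiv1u]; positivity, by rw [hderiv2]; exact neg_lt_zero.mpr (by positivity), ?_⟩
  rw [hderiv2, hderiv1u, hw]
  set r : ℝ := β * a / (B - a) with hrdef
  have hBa : β + 1 ≤ B - a := by simp only [hBdef]; linarith
  have hBapos : 0 < B - a := by linarith
  have hr0 : 0 < r := by positivity
  have hr1 : r ≤ 1 := by
    rw [hrdef, div_le_one hBapos]
    nlinarith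
  have hre : Real.exp (-(2 * β * M)) > 0 := Real.exp_pos _
  have hrδ : β * Real.exp (-(2 * β * M)) / B ≤ r := by
    rw [hrdef]
    apply div_le_div₀ (by positivity) (by nlinarith) hBapos (by linarith)
  have hμβ : μ₀ * β = 4 * Λ + 4 := by
    rw [hβdef]; field_simp
  rw [stmt_10_aux μ₀ Λ β B a hμβ (ne_of_gt hBapos), ← hrdef]
  have h1 : r * (r - 2) ≤ -r := by nlinarith
  linarith
end

section
/- Let n ∈ ℕ, μ₀ > 0, and let A be a real symmetric n×n matrix with ⟨Az, z⟩ ≥ μ₀|z|² for all z ∈ ℝⁿ. Let a > 0, ε ≥ 0, Λ ≥ 0, k ≥ 0, l ≥ 0 and l_ε ∈ ℝ be constants, and let w, w', w'' be real numbers with w > 0, w' > 0 and w'' ≤ 0. Suppose z ∈ ℝⁿ, f₀ ∈ ℝ, f_u ∈ ℝ and f_z ∈ ℝⁿ satisfy |f₀| ≤ l + Λ|z|², |f_z| ≤ k + Λ|z| and f_u ≤ l_ε + ε|z|². Then (w''/(2w))·⟨Az, z⟩ + (w'/w)·(⟨z, f_z⟩ − f₀) + f_u + a·|f_z + (w'/w)z|²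 ≤ |z|²·[ (μ₀/2)(w''/w) + 2Λ(w'/w) + (w'/w)² + ε + 2a(Λ + w'/w)² ] + l·(w'/w) + l_ε + (1+2a)·k². -/
set_option maxHeartbeats 4000000


open Matrix

/-- The key pointwise estimate for the transformed generator in the uniqueness proof:
if `⟨Az,z⟩ ≥ μ₀|z|²`, `|f₀| ≤ l + Λ|z|²`, `|f_z| ≤ k + Λ|z|`, `f_u ≤ l_ε + ε|z|²`,
and `w > 0`, `w' > 0`, `w'' ≤ 0`, then
`(w''/(2w))⟨Az,z⟩ + (w'/w)(⟨z,f_z⟩ − f₀) + f_u + a|f_z + (w'/w)z|²` is bounded by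
`|z|²[(μ₀/2)(w''/w) + 2Λ(w'/w) + (w'/w)² + ε + 2a(Λ + w'/w)²] + l(w'/w) + l_ε + (1+2a)k²`. -/
theorem stmt_12 (n : ℕ) (μ₀ : ℝ) (hμ₀ : 0 < μ₀)
    (A : Matrix (Fin n) (Fin n) ℝ) (hAsymm : A.IsSymm)
    (hA : ∀ z : Fin n → ℝ, μ₀ * (z ⬝ᵥ z) ≤ z ⬝ᵥ A.mulVec z)
    (a ε Λ k l lε : ℝ) (ha : 0 < a) (hε : 0 ≤ ε) (hΛ : 0 ≤ Λ) (hk : 0 ≤ k) (hl : 0 ≤ l)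
    (w w' w'' : ℝ) (hw : 0 < w) (hw' : 0 < w') (hw'' : w'' ≤ 0)
    (z fz : Fin n → ℝ) (f₀ fu : ℝ)
    (hf₀ : |f₀| ≤ l + Λ * (z ⬝ᵥ z))
    (hfz : Real.sqrt (fz ⬝ᵥ fz) ≤ k + Λ * Real.sqrt (z ⬝ᵥ z))
    (hfu : fu ≤ lε + ε * (z ⬝ᵥ z)) :
    w'' / (2 * w) * (z ⬝ᵥ A.mulVec z) + w' / w * ((z ⬝ᵥ fz) - f₀) + fu +
        a * ((fz + (w' / w) • z) ⬝ᵥ (fz + (w' / w) • z)) ≤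
      (z ⬝ᵥ z) *
          (μ₀ / 2 * (w'' / w) + 2 * Λ * (w' / w) + (w' / w) ^ 2 + ε +
            2 * a * (Λ + w' / w) ^ 2) +
        l * (w' / w) + lε + (1 + 2 * a) * k ^ 2 := by
  set c : ℝ := w' / w with hc
  have hc0 : 0 < c := div_pos hw' hw
  -- basic quantities
  have hzz : 0 ≤ z ⬝ᵥ z := Finset.sum_nonneg fun i _ => mul_self_nonneg (z i)
  have hff : 0 ≤ fz ⬝ᵥ fz := Finset.sum_nonneg fun i _ => mul_self_nonneg (fz i)
  set R : ℝ := Real.sqrt (z ⬝ᵥ z) with hR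
  set K : ℝ := Real.sqrt (fz ⬝ᵥ fz) with hKdef
  have hR0 : 0 ≤ R := Real.sqrt_nonneg _
  have hK0 : 0 ≤ K := Real.sqrt_nonneg _
  have hR2 : R ^ 2 = z ⬝ᵥ z := Real.sq_sqrt hzz
  have hK2 : K ^ 2 = fz ⬝ᵥ fz := Real.sq_sqrt hff
  -- Cauchy–Schwarz
  have hCS : (z ⬝ᵥ fz) ^ 2 ≤ (z ⬝ᵥ z) * (fz ⬝ᵥ fz) := by
    have := Finset.sum_mul_sq_le_sq_mul_sq Finset.univ z fz
    simpa [dotProduct, sq] using this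
  have hCS' : z ⬝ᵥ fz ≤ R * K := by
    nlinarith [sq_nonneg (z ⬝ᵥ fz - R * K), sq_nonneg (z ⬝ᵥ fz + R * K),
      mul_nonneg hR0 hK0]
  -- expand the quadratic term
  have hQ : (fz + c • z) ⬝ᵥ (fz + c • z)
      = fz ⬝ᵥ fz + 2 * c * (z ⬝ᵥ fz) + c ^ 2 * (z ⬝ᵥ z) := by
    simp [add_dotProduct, dotProduct_add, smul_dotProduct, dotProduct_smul,
      dotProduct_comm fz z, smul_eq_mul]
    ring
  have hQle : (fz + c • z) ⬝ᵥ (fz + c • z) ≤ (K + c * R) ^ 2 := by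
    rw [hQ, ← hR2, ← hK2]
    nlinarith [mul_nonneg (mul_nonneg hc0.le hR0) hK0]
  -- bound for the second-order term
  have hT1 : w'' / (2 * w) * (z ⬝ᵥ A.mulVec z) ≤ w'' / (2 * w) * (μ₀ * (z ⬝ᵥ z)) := by
    have h1 : w'' / (2 * w) ≤ 0 := div_nonpos_iff.mpr (Or.inr ⟨hw'', by linarith⟩)
    exact mul_le_mul_of_nonpos_left (hA z) h1
  -- bound on K
  have hKb : K ≤ k + Λ * R := hfz
  -- pull everything together
  have hf₀' : -f₀ ≤ l + Λ * (z ⬝ᵥ z) := by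
    have := abs_le.mp hf₀
    linarith [this.1]
  have haQ : a * ((fz + c • z) ⬝ᵥ (fz + c • z)) ≤ a * (K + c * R) ^ 2 :=
    mul_le_mul_of_nonneg_left hQle ha.le
  have hzfz : c * (z ⬝ᵥ fz) ≤ c * (R * K) := mul_le_mul_of_nonneg_left hCS' hc0.le
  have hT1' : w'' / (2 * w) * (μ₀ * (z ⬝ᵥ z)) = (z ⬝ᵥ z) * (μ₀ / 2 * (w'' / w)) := by
    field_simp
  -- final arithmetic
  have key : c * (R * K) + a * (K + c * R) ^ 2
      ≤ (z ⬝ᵥ z) * (2 * Λ * c + c ^ 2 + 2 * a * (Λ + c) ^ 2) - (z ⬝ᵥ z) * (Λ * c)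
        + (1 + 2 * a) * k ^ 2 := by
    rw [← hR2]
    have h1 : c * (R * K) ≤ c * R * (k + Λ * R) := by
      have := mul_le_mul_of_nonneg_left hKb (mul_nonneg hc0.le hR0)
      nlinarith
    have h2 : a * (K + c * R) ^ 2 ≤ a * (k + (Λ + c) * R) ^ 2 := by
      have hle : K + c * R ≤ k + (Λ + c) * R := by nlinarith
      have hnn : 0 ≤ K + c * R := by positivity
      have := mul_le_mul_of_nonneg_left
        (mul_self_le_mul_self hnn hle) ha.le
      nlinarith [this]
    nlinarith [h1, h2, sq_nonneg (k - c * R),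
      mul_nonneg ha.le (sq_nonneg (k - (Λ + c) * R))]
  have hKc : K + c * R ≤ k + (Λ + c) * R := by nlinarith
  calc w'' / (2 * w) * (z ⬝ᵥ A.mulVec z) + c * ((z ⬝ᵥ fz) - f₀) + fu +
        a * ((fz + c • z) ⬝ᵥ (fz + c • z))
      ≤ (z ⬝ᵥ z) * (μ₀ / 2 * (w'' / w)) + (c * (R * K) + c * (l + Λ * (z ⬝ᵥ z)))
        + (lε + ε * (z ⬝ᵥ z)) + a * (K + c * R) ^ 2 := by
        have h2 : c * ((z ⬝ᵥ fz) - f₀) ≤ c * (R * K) + c * (l + Λ * (z ⬝ᵥ z)) := by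
          have := mul_le_mul_of_nonneg_left hf₀' hc0.le
          nlinarith
        linarith [hT1, hT1' ▸ hT1]
    _ ≤ (z ⬝ᵥ z) *
          (μ₀ / 2 * (w'' / w) + 2 * Λ * c + c ^ 2 + ε + 2 * a * (Λ + c) ^ 2) +
        l * c + lε + (1 + 2 * a) * k ^ 2 := by nlinarith [key]
end
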